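/- Let Q_ε = (-ε^α, ε^α) × (0,1) with α > 1, and let u^ε be the harmonic-type solution given by the explicit Fourier series u^ε(x,y) = ū₀ + Σ_{n≥1} (u₀, φₙ^ε) φₙ^ε(x) cosh(nπ(1-y)/ε^{α-1}) / cosh(nπ/ε^{α-1}), where φₙ^ε(x) = ε^{-α/2} cos(nπx/ε^α) and ū₀ is the average of u₀ over (-ε^α, ε^α). Then there is a constant C independent of ε and u₀ such that ∫_{-ε^α}^{ε^α} |u^ε(x,y) - ū₀|² dx ≤ C exp(-2yπ/ε^{α-1}) ‖u₀‖²_{L²(-ε^α, ε^α)} for all y ∈ [0,1]. -/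

import Mathlib

open Real Set MeasureTheory intervalIntegral

/-- The orthonormal cosine basis functions `φₙ^ε(x) = ε^{-α/2} cos(nπx/ε^α)`. -/
noncomputable def cosBasis (ε α : ℝ) (n : ℕ) (x : ℝ) : ℝ :=
  ε ^ (-(α / 2)) * Real.cos ((n : ℝ) * π * x / ε ^ α)

/-- Fourier coefficient `(u₀, φₙ^ε)` in `L²(-ε^α, ε^α)`. -/
noncomputable def cosCoef (ε α : ℝ) (u₀ : ℝ → ℝ) (n : ℕ) : ℝ :=
  ∫ x in (-(ε ^ α))..(ε ^ α), u₀ x * cosBasis ε α n x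

/-- The average `ū₀` of `u₀` over `(-ε^α, ε^α)`. -/
noncomputable def avg (ε α : ℝ) (u₀ : ℝ → ℝ) : ℝ :=
  (1 / (2 * ε ^ α)) * ∫ x in (-(ε ^ α))..(ε ^ α), u₀ x

/-- The explicit Fourier-series solution
`u^ε(x,y) = ū₀ + Σ_{n≥1} (u₀,φₙ^ε) φₙ^ε(x) cosh(nπ(1-y)/ε^{α-1})/cosh(nπ/ε^{α-1})`. -/
noncomputable def fourierSol (ε α : ℝ) (u₀ : ℝ → ℝ) (x y : ℝ) : ℝ :=
  avg ε α u₀ + ∑' n : ℕ,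
    cosCoef ε α u₀ (n + 1) * cosBasis ε α (n + 1) x *
      (Real.cosh (((n : ℝ) + 1) * π * (1 - y) / ε ^ (α - 1)) /
        Real.cosh (((n : ℝ) + 1) * π / ε ^ (α - 1)))


lemma aux_int_cos (L : ℝ) (hL : 0 < L) (k : ℤ) (hk : k ≠ 0) :
    ∫ x in (-L)..L, Real.cos ((k : ℝ) * π * x / L) = 0 := by
  have hc : (k : ℝ) * π / L ≠ 0 := by
    apply div_ne_zero (mul_ne_zero (Int.cast_ne_zero.2 hk) Real.pi_ne_zero) hL.ne'
  have h1 : ∀ x : ℝ, (k : ℝ) * π * x / L = ((k : ℝ) * π / L) * x := fun x => by ring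
  simp_rw [h1]
  rw [integral_comp_mul_left (fun x => Real.cos x) hc]
  rw [integral_cos]
  have h2 : (k : ℝ) * π / L * L = k * π := by field_simp
  have h3 : (k : ℝ) * π / L * (-L) = -(k * π) := by field_simp
  rw [h2, h3, Real.sin_int_mul_pi, Real.sin_neg, Real.sin_int_mul_pi]
  simp

lemma aux_cont_cos (c : ℝ) (L : ℝ) : Continuous (fun x : ℝ => Real.cos (c * x / L)) := by
  fun_prop

lemma aux_orth (L : ℝ) (hL : 0 < L) (n m : ℕ) (hn : n ≠ 0) (hm : m ≠ 0) :
    ∫ x in (-L)..L, Real.cos ((n : ℝ) * π * x / L) * Real.cos ((m : ℝ) * π * x / L)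
      = if n = m then L else 0 := by
  have key : ∀ x : ℝ, Real.cos ((n : ℝ) * π * x / L) * Real.cos ((m : ℝ) * π * x / L)
      = (Real.cos ((((n : ℤ) - m : ℤ) : ℝ) * π * x / L)
          + Real.cos ((((n : ℤ) + m : ℤ) : ℝ) * π * x / L)) / 2 := by
    intro x
    have e1 : (((n : ℤ) - m : ℤ) : ℝ) * π * x / L
        = (n : ℝ) * π * x / L - (m : ℝ) * π * x / L := by push_cast; ring
    have e2 : (((n : ℤ) + m : ℤ) : ℝ) * π * x / L
        = (n : ℝ) * π * x / L + (m : ℝ) * π * x / L := by push_cast; ring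
    rw [e1, e2, Real.cos_sub, Real.cos_add]; ring
  rw [intervalIntegral.integral_congr (g := fun x => (Real.cos ((((n : ℤ) - m : ℤ) : ℝ) * π * x / L)
          + Real.cos ((((n : ℤ) + m : ℤ) : ℝ) * π * x / L)) / 2) (fun x _ => key x)]
  have i1 : IntervalIntegrable (fun x : ℝ => Real.cos ((((n : ℤ) - m : ℤ) : ℝ) * π * x / L))
      volume (-L) L := ((aux_cont_cos _ L).comp (by fun_prop : Continuous (id : ℝ → ℝ))).intervalIntegrable _ _
  have i2 : IntervalIntegrable (fun x : ℝ => Real.cos ((((n : ℤ) + m : ℤ) : ℝ) * π * x / L))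
      volume (-L) L := by
    have : Continuous (fun x : ℝ => Real.cos ((((n : ℤ) + m : ℤ) : ℝ) * π * x / L)) := by fun_prop
    exact this.intervalIntegrable _ _
  rw [intervalIntegral.integral_div, intervalIntegral.integral_add i1 i2]
  by_cases h : n = m
  · subst h
    have h0 : ∀ x : ℝ, Real.cos ((((n:ℤ) - n : ℤ) : ℝ) * π * x / L) = 1 := by intro x; simp
    rw [intervalIntegral.integral_congr (g := fun _ => (1:ℝ)) (fun x _ => h0 x)]
    rw [aux_int_cos L hL _ (by positivity : ((n : ℤ) + n : ℤ) ≠ 0)]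
    simp only [if_pos rfl]
    rw [intervalIntegral.integral_const]
    norm_num
  · rw [aux_int_cos L hL _ (sub_ne_zero.2 (by exact_mod_cast h)),
        aux_int_cos L hL _ (by positivity)]
    simp [h]


lemma aux_sumsq (L : ℝ) (ψ : ℕ → ℝ → ℝ) (hcont : ∀ i, Continuous (ψ i))
    (horth : ∀ i j, (∫ x in (-L)..L, ψ i x * ψ j x) = if i = j then 1 else 0)
    (d : ℕ → ℝ) (N : ℕ) :
    (∫ x in (-L)..L, (∑ i ∈ Finset.range N, d i * ψ i x) ^ 2)
      = ∑ i ∈ Finset.range N, (d i) ^ 2 := by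
  have h1 : ∀ x : ℝ, (∑ i ∈ Finset.range N, d i * ψ i x) ^ 2
      = ∑ i ∈ Finset.range N, ∑ j ∈ Finset.range N, (d i * d j) * (ψ i x * ψ j x) := by
    intro x
    rw [sq, Finset.sum_mul_sum]
    exact Finset.sum_congr rfl fun i _ => Finset.sum_congr rfl fun j _ => by ring
  rw [intervalIntegral.integral_congr (g := fun x => ∑ i ∈ Finset.range N,
      ∑ j ∈ Finset.range N, (d i * d j) * (ψ i x * ψ j x)) (fun x _ => h1 x)]
  rw [intervalIntegral.integral_finset_sum]
  · have h2 : ∀ i ∈ Finset.range N, (∫ x in (-L)..L,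
        ∑ j ∈ Finset.range N, (d i * d j) * (ψ i x * ψ j x)) = d i ^ 2 := by
      intro i hi
      rw [intervalIntegral.integral_finset_sum]
      · have h3 : ∀ j ∈ Finset.range N,
            (∫ x in (-L)..L, (d i * d j) * (ψ i x * ψ j x))
              = if i = j then d i * d j else 0 := by
          intro j _
          rw [intervalIntegral.integral_const_mul, horth i j]
          by_cases h : i = j <;> simp [h]
        rw [Finset.sum_congr rfl h3, Finset.sum_ite_eq (Finset.range N) i (fun j => d i * d j)]
        simp [Finset.mem_range.1 hi, sq]
      · intro j _
        exact (continuous_const.mul ((hcont i).mul (hcont j))).intervalIntegrable _ _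
    rw [Finset.sum_congr rfl h2]
  · intro i _
    refine Continuous.intervalIntegrable ?_ _ _
    exact continuous_finset_sum _ fun j _ => continuous_const.mul ((hcont i).mul (hcont j))

lemma aux_bessel (L : ℝ) (hL : 0 < L) (u₀ : ℝ → ℝ) (ψ : ℕ → ℝ → ℝ)
    (hcont : ∀ i, Continuous (ψ i))
    (horth : ∀ i j, (∫ x in (-L)..L, ψ i x * ψ j x) = if i = j then 1 else 0)
    (hu2 : IntervalIntegrable (fun x => u₀ x ^ 2) volume (-L) L)
    (huψ : ∀ i, IntervalIntegrable (fun x => u₀ x * ψ i x) volume (-L) L)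
    (N : ℕ) :
    ∑ i ∈ Finset.range N, (∫ x in (-L)..L, u₀ x * ψ i x) ^ 2
      ≤ ∫ x in (-L)..L, u₀ x ^ 2 := by
  set d : ℕ → ℝ := fun i => ∫ x in (-L)..L, u₀ x * ψ i x with hd
  set T : ℝ → ℝ := fun x => ∑ i ∈ Finset.range N, d i * ψ i x with hT
  have hTcont : Continuous T := continuous_finset_sum _ fun i _ => continuous_const.mul (hcont i)
  have huT : IntervalIntegrable (fun x => u₀ x * T x) volume (-L) L := by
    have : ∀ x, u₀ x * T x = ∑ i ∈ Finset.range N, d i * (u₀ x * ψ i x) := by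
      intro x; rw [hT]; simp only [Finset.mul_sum]
      exact Finset.sum_congr rfl fun i _ => by ring
    refine IntervalIntegrable.congr_ae (IntervalIntegrable.sum (Finset.range N)
      (fun i _ => (huψ i).const_mul (d i))) ?_
    · filter_upwards with x
      rw [Finset.sum_apply]
      exact (this x).symm
  have hint_uT : (∫ x in (-L)..L, u₀ x * T x) = ∑ i ∈ Finset.range N, d i ^ 2 := by
    have e : ∀ x, u₀ x * T x = ∑ i ∈ Finset.range N, d i * (u₀ x * ψ i x) := by
      intro x; rw [hT]; simp only [Finset.mul_sum]
      exact Finset.sum_congr rfl fun i _ => by ring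
    rw [intervalIntegral.integral_congr (g := fun x => ∑ i ∈ Finset.range N,
        d i * (u₀ x * ψ i x)) (fun x _ => e x)]
    rw [intervalIntegral.integral_finset_sum (fun i _ => (huψ i).const_mul (d i))]
    exact Finset.sum_congr rfl fun i _ => by
      rw [intervalIntegral.integral_const_mul, sq]
  have hT2 : (∫ x in (-L)..L, T x ^ 2) = ∑ i ∈ Finset.range N, d i ^ 2 :=
    aux_sumsq L ψ hcont horth d N
  have hsq : IntervalIntegrable (fun x => (u₀ x - T x) ^ 2) volume (-L) L := by
    have e : ∀ x, (u₀ x - T x) ^ 2 = u₀ x ^ 2 - 2 * (u₀ x * T x) + T x ^ 2 := fun x => by ring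
    refine IntervalIntegrable.congr_ae (((hu2.sub (huT.const_mul 2)).add
      ((hTcont.pow 2).intervalIntegrable _ _))) ?_
    filter_upwards with x using (e x).symm
  have hpos : 0 ≤ ∫ x in (-L)..L, (u₀ x - T x) ^ 2 :=
    intervalIntegral.integral_nonneg (by linarith [hL.le] : -L ≤ L) (fun x _ => sq_nonneg _)
  have hexpand : (∫ x in (-L)..L, (u₀ x - T x) ^ 2)
      = (∫ x in (-L)..L, u₀ x ^ 2) - ∑ i ∈ Finset.range N, d i ^ 2 := by
    have e : ∀ x, (u₀ x - T x) ^ 2 = u₀ x ^ 2 - 2 * (u₀ x * T x) + T x ^ 2 := fun x => by ring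
    rw [intervalIntegral.integral_congr (g := fun x => u₀ x ^ 2 - 2 * (u₀ x * T x) + T x ^ 2)
      (fun x _ => e x)]
    rw [intervalIntegral.integral_add (g := fun x => T x ^ 2) (hu2.sub (huT.const_mul 2))
      ((hTcont.pow 2).intervalIntegrable _ _),
      intervalIntegral.integral_sub hu2 (huT.const_mul 2),
      intervalIntegral.integral_const_mul, hint_uT, hT2]
    ring
  linarith [hexpand ▸ hpos]


lemma aux_cosh (A y : ℝ) (hA : 0 < A) (hy0 : 0 ≤ y) (hy1 : y ≤ 1) :
    Real.cosh (A * (1 - y)) / Real.cosh A ≤ 2 * Real.exp (-(A * y)) := by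
  have h1 : Real.cosh (A * (1 - y)) ≤ Real.exp (A * (1 - y)) := by
    rw [Real.cosh_eq]
    have : Real.exp (-(A * (1 - y))) ≤ Real.exp (A * (1 - y)) :=
      Real.exp_le_exp.2 (by nlinarith)
    linarith
  have h2 : Real.exp A / 2 ≤ Real.cosh A := by
    rw [Real.cosh_eq]
    have := (Real.exp_pos (-A)).le
    linarith
  have h3 : (0:ℝ) < Real.cosh A := Real.cosh_pos A
  have h4 : (0:ℝ) < Real.exp A / 2 := by positivity
  have step1 : Real.cosh (A * (1 - y)) / Real.cosh A
      ≤ Real.exp (A * (1 - y)) / Real.cosh A := by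
    apply div_le_div_of_nonneg_right h1 h3.le |>.trans_eq rfl
  have step2 : Real.exp (A * (1 - y)) / Real.cosh A
      ≤ Real.exp (A * (1 - y)) / (Real.exp A / 2) :=
    div_le_div_of_nonneg_left (Real.exp_pos _).le h4 h2
  have step3 : Real.exp (A * (1 - y)) / (Real.exp A / 2) = 2 * Real.exp (-(A * y)) := by
    rw [div_div_eq_mul_div, div_eq_iff (Real.exp_pos A).ne', mul_assoc, ← Real.exp_add]
    ring_nf
  linarith [step3 ▸ step2]

/-- there is `C > 0`, independent of `ε` and `u₀`, such that
`∫_{-ε^α}^{ε^α} |u^ε(x,y) - ū₀|² dx ≤ C exp(-2yπ/ε^{α-1}) ‖u₀‖²_{L²(-ε^α,ε^α)}`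
for all `y ∈ [0,1]`. -/
theorem stmt6 (α : ℝ) (hα : 1 < α) :
    ∃ C : ℝ, 0 < C ∧ ∀ ε ∈ Ioo (0:ℝ) 1, ∀ u₀ : ℝ → ℝ,
      MeasureTheory.MemLp u₀ 2
        (MeasureTheory.volume.restrict (Set.Ioo (-(ε ^ α)) (ε ^ α))) →
      ∀ y ∈ Icc (0:ℝ) 1,
        (∫ x in (-(ε ^ α))..(ε ^ α), (fourierSol ε α u₀ x y - avg ε α u₀) ^ 2)
          ≤ C * Real.exp (-(2 * y * π) / ε ^ (α - 1)) *
              ∫ x in (-(ε ^ α))..(ε ^ α), (u₀ x) ^ 2 := by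
  refine ⟨4, by norm_num, ?_⟩
  rintro ε ⟨hε0, hε1⟩ u₀ hu₀ y ⟨hy0, hy1⟩
  set L : ℝ := ε ^ α with hLdef
  set β : ℝ := ε ^ (α - 1) with hβdef
  have hL : 0 < L := Real.rpow_pos_of_pos hε0 α
  have hβ : 0 < β := Real.rpow_pos_of_pos hε0 _
  have hLL : -L ≤ L := by linarith
  set b : ℝ := ε ^ (-(α / 2)) with hbdef
  have hb : 0 < b := Real.rpow_pos_of_pos hε0 _
  have hbbL : b * b * L = 1 := by
    rw [hbdef, hLdef, ← Real.rpow_add hε0, ← Real.rpow_add hε0,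
      show -(α / 2) + -(α / 2) + α = 0 by ring, Real.rpow_zero]
  -- basis functions
  set ψ : ℕ → ℝ → ℝ := fun n x => cosBasis ε α (n + 1) x with hψdef
  have hcont : ∀ i, Continuous (ψ i) := by
    intro i
    rw [hψdef]
    simp only [cosBasis]
    fun_prop
  have hψbdd : ∀ i x, ‖ψ i x‖ ≤ b := by
    intro i x
    rw [hψdef]
    simp only [cosBasis, ← hbdef]
    rw [Real.norm_eq_abs, abs_mul, abs_of_pos hb]
    calc b * |Real.cos _| ≤ b * 1 := by
          exact mul_le_mul_of_nonneg_left (Real.abs_cos_le_one _) hb.le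
      _ = b := mul_one b
  have horth : ∀ i j, (∫ x in (-L)..L, ψ i x * ψ j x) = if i = j then 1 else 0 := by
    intro i j
    have e : ∀ x : ℝ, ψ i x * ψ j x
        = (b * b) * (Real.cos (((i + 1 : ℕ) : ℝ) * π * x / L)
            * Real.cos (((j + 1 : ℕ) : ℝ) * π * x / L)) := by
      intro x
      rw [hψdef]
      simp only [cosBasis, ← hbdef, ← hLdef]
      ring
    rw [intervalIntegral.integral_congr (g := fun x => (b * b)
        * (Real.cos (((i + 1 : ℕ) : ℝ) * π * x / L) * Real.cos (((j + 1 : ℕ) : ℝ) * π * x / L)))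
        (fun x _ => e x)]
    rw [intervalIntegral.integral_const_mul,
      aux_orth L hL (i + 1) (j + 1) (Nat.succ_ne_zero i) (Nat.succ_ne_zero j)]
    by_cases h : i = j
    · subst h; simp [hbbL]
    · have h' : i + 1 ≠ j + 1 := fun hc => h (Nat.succ_injective hc)
      simp [h, h']
  -- integrability
  have hrestr : volume.restrict (Ioo (-L) L) = volume.restrict (Ioc (-L) L) :=
    Measure.restrict_congr_set Ioo_ae_eq_Ioc
  haveI : IsFiniteMeasure (volume.restrict (Ioo (-L) L)) :=
    ⟨by rw [Measure.restrict_apply_univ]; exact measure_Ioo_lt_top⟩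
  have hu2 : IntervalIntegrable (fun x => u₀ x ^ 2) volume (-L) L := by
    rw [intervalIntegrable_iff_integrableOn_Ioc_of_le hLL]
    have := hu₀.integrable_sq
    rwa [hrestr] at this
  have hu1 : Integrable u₀ (volume.restrict (Ioc (-L) L)) := by
    have := hu₀.integrable (by norm_num : (1 : ENNReal) ≤ 2)
    rwa [hrestr] at this
  have huψ : ∀ i, IntervalIntegrable (fun x => u₀ x * ψ i x) volume (-L) L := by
    intro i
    rw [intervalIntegrable_iff_integrableOn_Ioc_of_le hLL]
    have h1 : Integrable (fun x => ψ i x * u₀ x) (volume.restrict (Ioc (-L) L)) :=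
      hu1.bdd_mul (hcont i).aestronglyMeasurable (c := b) (Filter.Eventually.of_forall fun x => hψbdd i x)
    exact h1.congr (Filter.Eventually.of_forall fun x => mul_comm _ _)
  -- coefficients and Bessel
  set a : ℕ → ℝ := fun n => cosCoef ε α u₀ (n + 1) with hadef
  have ha : ∀ n, a n = ∫ x in (-L)..L, u₀ x * ψ n x := by
    intro n
    rw [hadef, hψdef]
    simp only [cosCoef, ← hLdef]
  have hbess : ∀ N, ∑ i ∈ Finset.range N, (a i) ^ 2 ≤ ∫ x in (-L)..L, u₀ x ^ 2 := by
    intro N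
    simp_rw [ha]
    exact aux_bessel L hL u₀ ψ hcont horth hu2 huψ N
  -- cosh ratios
  set r : ℕ → ℝ := fun n => Real.cosh (((n : ℝ) + 1) * π * (1 - y) / β)
      / Real.cosh (((n : ℝ) + 1) * π / β) with hrdef
  set E : ℝ := Real.exp (-(π * y) / β) with hEdef
  have hE : 0 < E := Real.exp_pos _
  have hr0 : ∀ n, 0 ≤ r n := by
    intro n
    rw [hrdef]
    exact div_nonneg (Real.cosh_pos _).le (Real.cosh_pos _).le
  have hrle : ∀ n, r n ≤ 2 * E := by
    intro n
    have hA : 0 < ((n : ℝ) + 1) * π / β := by positivity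
    have h := aux_cosh (((n : ℝ) + 1) * π / β) y hA hy0 hy1
    rw [show ((n : ℝ) + 1) * π / β * (1 - y) = ((n : ℝ) + 1) * π * (1 - y) / β by ring] at h
    rw [hrdef]
    refine h.trans ?_
    rw [hEdef]
    have harg : -(((n : ℝ) + 1) * π / β * y) ≤ -(π * y) / β := by
      rw [neg_div, neg_le_neg_iff]
      rw [div_mul_eq_mul_div]
      apply div_le_div_of_nonneg_right ?_ hβ.le
      nlinarith [mul_nonneg (mul_nonneg (Nat.cast_nonneg (α := ℝ) n) Real.pi_pos.le) hy0]
    exact mul_le_mul_of_nonneg_left (Real.exp_le_exp.2 harg) (by norm_num)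
  -- the series and partial sums
  set S : ℝ → ℝ := fun x => ∑' n, a n * ψ n x * r n with hSdef
  have hfs : ∀ x, fourierSol ε α u₀ x y - avg ε α u₀ = S x := by
    intro x
    rw [hSdef]
    simp only [fourierSol, add_sub_cancel_left, hadef, hψdef, hrdef, ← hβdef]
  simp only [hfs]
  set SN : ℕ → ℝ → ℝ := fun N x => ∑ i ∈ Finset.range N, a i * ψ i x * r i with hSNdef
  have hSNcont : ∀ N, Continuous (SN N) := by
    intro N
    rw [hSNdef]
    exact continuous_finset_sum _ fun i _ => ((continuous_const.mul (hcont i)).mul continuous_const)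
  have hSNsq : ∀ N, (∫ x in (-L)..L, SN N x ^ 2) = ∑ i ∈ Finset.range N, (a i * r i) ^ 2 := by
    intro N
    have e : ∀ x, SN N x = ∑ i ∈ Finset.range N, (a i * r i) * ψ i x := by
      intro x
      rw [hSNdef]
      exact Finset.sum_congr rfl fun i _ => by ring
    rw [intervalIntegral.integral_congr
      (g := fun x => (∑ i ∈ Finset.range N, (a i * r i) * ψ i x) ^ 2) (fun x _ => by rw [e x])]
    exact aux_sumsq L ψ hcont horth (fun i => a i * r i) N
  set K : ℝ := 4 * Real.exp (-(2 * y * π) / β) * ∫ x in (-L)..L, u₀ x ^ 2 with hKdef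
  have hintnn : 0 ≤ ∫ x in (-L)..L, u₀ x ^ 2 :=
    intervalIntegral.integral_nonneg hLL fun x _ => sq_nonneg _
  have hK0 : 0 ≤ K := by
    rw [hKdef]
    have : (0:ℝ) < Real.exp (-(2 * y * π) / β) := Real.exp_pos _
    nlinarith
  have hE2 : E ^ 2 = Real.exp (-(2 * y * π) / β) := by
    rw [hEdef, sq, ← Real.exp_add]
    congr 1
    ring
  have hbound : ∀ N, (∫ x in (-L)..L, SN N x ^ 2) ≤ K := by
    intro N
    rw [hSNsq N, hKdef]
    have step : ∀ i ∈ Finset.range N, (a i * r i) ^ 2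
        ≤ (4 * Real.exp (-(2 * y * π) / β)) * a i ^ 2 := by
      intro i _
      have h1 : r i ^ 2 ≤ (2 * E) ^ 2 := pow_le_pow_left₀ (hr0 i) (hrle i) 2
      have h2 : (2 * E) ^ 2 = 4 * Real.exp (-(2 * y * π) / β) := by
        rw [mul_pow, hE2]; norm_num
      calc (a i * r i) ^ 2 = a i ^ 2 * r i ^ 2 := by ring
        _ ≤ a i ^ 2 * (2 * E) ^ 2 := mul_le_mul_of_nonneg_left h1 (sq_nonneg _)
        _ = (4 * Real.exp (-(2 * y * π) / β)) * a i ^ 2 := by rw [h2]; ring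
    calc ∑ i ∈ Finset.range N, (a i * r i) ^ 2
        ≤ ∑ i ∈ Finset.range N, (4 * Real.exp (-(2 * y * π) / β)) * a i ^ 2 :=
          Finset.sum_le_sum step
      _ = (4 * Real.exp (-(2 * y * π) / β)) * ∑ i ∈ Finset.range N, a i ^ 2 := by
          rw [Finset.mul_sum]
      _ ≤ (4 * Real.exp (-(2 * y * π) / β)) * ∫ x in (-L)..L, u₀ x ^ 2 :=
          mul_le_mul_of_nonneg_left (hbess N) (by positivity)
  -- pointwise liminf bound
  have hpt : ∀ x, ENNReal.ofReal (S x ^ 2)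
      ≤ Filter.liminf (fun N => ENNReal.ofReal (SN N x ^ 2)) Filter.atTop := by
    intro x
    by_cases hsum : Summable (fun n => a n * ψ n x * r n)
    · have h1 : Filter.Tendsto (fun N => SN N x) Filter.atTop (nhds (S x)) := by
        rw [hSdef, hSNdef]
        exact hsum.hasSum.tendsto_sum_nat
      have h2 : Filter.Tendsto (fun N => SN N x ^ 2) Filter.atTop (nhds (S x ^ 2)) := by
        simpa [sq] using h1.mul h1
      have h3 : Filter.Tendsto (fun N => ENNReal.ofReal (SN N x ^ 2)) Filter.atTop
          (nhds (ENNReal.ofReal (S x ^ 2))) :=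
        (ENNReal.continuous_ofReal.tendsto _).comp h2
      exact le_of_eq h3.liminf_eq.symm
    · have : S x = 0 := by
        rw [hSdef]
        exact tsum_eq_zero_of_not_summable hsum
      rw [this]
      simp
  have hmeas : ∀ N, Measurable (fun x => ENNReal.ofReal (SN N x ^ 2)) := fun N =>
    ENNReal.measurable_ofReal.comp ((hSNcont N).pow 2).measurable
  -- conclusion
  by_cases hSint : IntervalIntegrable (fun x => S x ^ 2) volume (-L) L
  · have hSon : Integrable (fun x => S x ^ 2) (volume.restrict (Ioc (-L) L)) := by
      rwa [intervalIntegrable_iff_integrableOn_Ioc_of_le hLL] at hSint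
    have lhs_eq : (∫ x in (-L)..L, S x ^ 2)
        = (∫⁻ x, ENNReal.ofReal (S x ^ 2) ∂(volume.restrict (Ioc (-L) L))).toReal := by
      rw [intervalIntegral.integral_of_le hLL]
      exact MeasureTheory.integral_eq_lintegral_of_nonneg_ae
        (Filter.Eventually.of_forall fun x => sq_nonneg _) hSon.aestronglyMeasurable
    have chain : (∫⁻ x, ENNReal.ofReal (S x ^ 2) ∂(volume.restrict (Ioc (-L) L)))
        ≤ ENNReal.ofReal K := by
      calc (∫⁻ x, ENNReal.ofReal (S x ^ 2) ∂(volume.restrict (Ioc (-L) L)))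
          ≤ ∫⁻ x, Filter.liminf (fun N => ENNReal.ofReal (SN N x ^ 2)) Filter.atTop
              ∂(volume.restrict (Ioc (-L) L)) := lintegral_mono fun x => hpt x
        _ ≤ Filter.liminf (fun N => ∫⁻ x, ENNReal.ofReal (SN N x ^ 2)
              ∂(volume.restrict (Ioc (-L) L))) Filter.atTop := lintegral_liminf_le hmeas
        _ ≤ ENNReal.ofReal K := by
            have hNle : ∀ N, (∫⁻ x, ENNReal.ofReal (SN N x ^ 2)
                ∂(volume.restrict (Ioc (-L) L))) ≤ ENNReal.ofReal K := by
              intro N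
              have hint : Integrable (fun x => SN N x ^ 2) (volume.restrict (Ioc (-L) L)) := by
                have := ((hSNcont N).pow 2).intervalIntegrable (μ := volume) (-L) L
                rwa [intervalIntegrable_iff_integrableOn_Ioc_of_le hLL] at this
              rw [← MeasureTheory.ofReal_integral_eq_lintegral_ofReal hint
                (Filter.Eventually.of_forall fun x => sq_nonneg _)]
              apply ENNReal.ofReal_le_ofReal
              rw [← intervalIntegral.integral_of_le hLL]
              exact hbound N
            calc Filter.liminf (fun N => ∫⁻ x, ENNReal.ofReal (SN N x ^ 2)
                  ∂(volume.restrict (Ioc (-L) L))) Filter.atTop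
                ≤ Filter.liminf (fun _ => ENNReal.ofReal K) Filter.atTop :=
                  Filter.liminf_le_liminf (Filter.Eventually.of_forall hNle)
              _ = ENNReal.ofReal K := Filter.liminf_const _
    rw [lhs_eq]
    calc (∫⁻ x, ENNReal.ofReal (S x ^ 2) ∂(volume.restrict (Ioc (-L) L))).toReal
        ≤ (ENNReal.ofReal K).toReal := ENNReal.toReal_mono ENNReal.ofReal_ne_top chain
      _ = K := ENNReal.toReal_ofReal hK0
  · rw [intervalIntegral.integral_undef hSint]
    exact hK0
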